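/- arXiv:math/9810100 — 2 statements merged into one kernel-verified Lean document; each statement's English description precedes it below -/
import Mathlib

section
/- Let B : Matrix (Fin 4) (Fin 4) ℤ be the matrix with rows (0,1,1,1), (1,0,1,1), (1,1,0,1), (1,1,0,0). Let H be the subgroup of the additive group Fin 4 → ℤ generated by the four elements rᵢ (i : Fin 4) defined by rᵢ j = (if i = j then 1 else 0) − B i j. Then there is an additive group isomorphism ψ from (Fin 4 → ℤ) ⧸ H onto ZMod 2 × ZMod 6 sending the class of the standard basis vector e₀ to (0,1), of e₁ to (1,1), of e₂ to (0,4), and of e₃ to (1,2); consequently the class of e₀+e₁+e₂+e₃ is sent to (0,2). -/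
/-- The matrix `B` with rows `(0,1,1,1), (1,0,1,1), (1,1,0,1), (1,1,0,0)`. -/
def B : Matrix (Fin 4) (Fin 4) ℤ := !![0,1,1,1; 1,0,1,1; 1,1,0,1; 1,1,0,0]

/-- The generators `rᵢ j = (if i = j then 1 else 0) − B i j` of the relation subgroup. -/
def r (i : Fin 4) : Fin 4 → ℤ := fun j => (if i = j then 1 else 0) - B i j

/-- The subgroup of `Fin 4 → ℤ` generated by the `rᵢ`. -/
def H : AddSubgroup (Fin 4 → ℤ) := AddSubgroup.closure (Set.range r)

/-- The standard basis vector `eᵢ`. -/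
def e (i : Fin 4) : Fin 4 → ℤ := Pi.single i 1

/-- The map to `ZMod 2 × ZMod 6`. -/
def phi : (Fin 4 → ℤ) →+ (ZMod 2 × ZMod 6) where
  toFun x := (((x 1 + x 3 : ℤ) : ZMod 2), ((x 0 + x 1 + 4 * x 2 + 2 * x 3 : ℤ) : ZMod 6))
  map_zero' := by simp
  map_add' x y := by
    simp only [Pi.add_apply, Prod.mk_add_mk, Prod.mk.injEq]
    constructor <;> push_cast <;> ring

lemma combo_mem_H (c0 c1 c2 c3 : ℤ) : c0 • r 0 + c1 • r 1 + c2 • r 2 + c3 • r 3 ∈ H := by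
  have h : ∀ i, r i ∈ H := fun i => AddSubgroup.subset_closure ⟨i, rfl⟩
  exact add_mem (add_mem (add_mem (zsmul_mem (h 0) _) (zsmul_mem (h 1) _))
    (zsmul_mem (h 2) _)) (zsmul_mem (h 3) _)

lemma mem_H_of_eq (x : Fin 4 → ℤ) (c0 c1 c2 c3 : ℤ)
    (hx : x = c0 • r 0 + c1 • r 1 + c2 • r 2 + c3 • r 3) : x ∈ H := by
  rw [hx]; exact combo_mem_H c0 c1 c2 c3

lemma phi_ker : ∀ x ∈ H, phi x = 0 := by
  intro x hx
  refine AddSubgroup.closure_induction ?_ (by simp) (by intro a b _ _ ha hb; simp [ha, hb])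
    (by intro a _ ha; simp [ha]) hx
  rintro _ ⟨i, rfl⟩
  fin_cases i <;> · simp only [phi, r, B, AddMonoidHom.coe_mk, ZeroHom.coe_mk]; decide

/-- The induced map on the quotient. -/
def psiHom : ((Fin 4 → ℤ) ⧸ H) →+ (ZMod 2 × ZMod 6) :=
  QuotientAddGroup.lift H phi phi_ker

lemma psiHom_mk (x : Fin 4 → ℤ) : psiHom (QuotientAddGroup.mk x) = phi x := rfl

/-- Elements of the quotient. -/
def qu : (Fin 4 → ℤ) ⧸ H := QuotientAddGroup.mk (e 1 - e 0)
def qv : (Fin 4 → ℤ) ⧸ H := QuotientAddGroup.mk (e 0)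

lemma two_qu : (2 : ℤ) • qu = 0 := by
  show QuotientAddGroup.mk ((2 : ℤ) • (e 1 - e 0)) = 0
  rw [QuotientAddGroup.eq_zero_iff]
  exact mem_H_of_eq _ (-1) 1 0 0 (by decide)

lemma six_qv : (6 : ℤ) • qv = 0 := by
  show QuotientAddGroup.mk ((6 : ℤ) • e 0) = 0
  rw [QuotientAddGroup.eq_zero_iff]
  exact mem_H_of_eq _ 1 (-2) (-1) (-2) (by decide)

/-- Lift from `ZMod 2`. -/
def g2 : ZMod 2 →+ ((Fin 4 → ℤ) ⧸ H) :=
  ZMod.lift 2 ⟨zmultiplesHom _ qu, by simpa using two_qu⟩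

/-- Lift from `ZMod 6`. -/
def g6 : ZMod 6 →+ ((Fin 4 → ℤ) ⧸ H) :=
  ZMod.lift 6 ⟨zmultiplesHom _ qv, by simpa using six_qv⟩

lemma g2_coe (m : ℤ) : g2 (m : ZMod 2) = m • qu := ZMod.lift_coe _ _ _
lemma g6_coe (m : ℤ) : g6 (m : ZMod 6) = m • qv := ZMod.lift_coe _ _ _

/-- The candidate inverse. -/
def invFun' : (ZMod 2 × ZMod 6) → ((Fin 4 → ℤ) ⧸ H) := fun p => g2 p.1 + g6 p.2

lemma hom_ext {M : Type*} [AddCommGroup M] (f g : (Fin 4 → ℤ) →+ M)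
    (h : ∀ i, f (e i) = g (e i)) : f = g := by
  ext x
  simpa [e] using h x

/-- The inverse as a hom. -/
def invHom : (ZMod 2 × ZMod 6) →+ ((Fin 4 → ℤ) ⧸ H) :=
  g2.comp (AddMonoidHom.fst _ _) + g6.comp (AddMonoidHom.snd _ _)

lemma invFun'_eq (p : ZMod 2 × ZMod 6) : invFun' p = invHom p := rfl

lemma phi_e0 : phi (e 0) = (0, 1) := by simp only [phi, AddMonoidHom.coe_mk, ZeroHom.coe_mk]; decide
lemma phi_e1 : phi (e 1) = (1, 1) := by simp only [phi, AddMonoidHom.coe_mk, ZeroHom.coe_mk]; decide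
lemma phi_e2 : phi (e 2) = (0, 4) := by simp only [phi, AddMonoidHom.coe_mk, ZeroHom.coe_mk]; decide
lemma phi_e3 : phi (e 3) = (1, 2) := by simp only [phi, AddMonoidHom.coe_mk, ZeroHom.coe_mk]; decide

lemma left_inv' : Function.LeftInverse invFun' psiHom := by
  have key : (invHom.comp psiHom).comp (QuotientAddGroup.mk' H) = QuotientAddGroup.mk' H := by
    apply hom_ext
    intro i
    have E0 : g2 (phi (e 0)).1 + g6 (phi (e 0)).2 = (QuotientAddGroup.mk (e 0) : (Fin 4 → ℤ) ⧸ H) := by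
      rw [phi_e0]
      rw [show ((0 : ZMod 2)) = ((0 : ℤ) : ZMod 2) by norm_cast,
          show ((1 : ZMod 6)) = ((1 : ℤ) : ZMod 6) by norm_cast, g2_coe, g6_coe]
      show (0 : ℤ) • qu + (1 : ℤ) • qv = _
      rw [zero_zsmul, one_zsmul, zero_add]
      rfl
    have E1 : g2 (phi (e 1)).1 + g6 (phi (e 1)).2 = (QuotientAddGroup.mk (e 1) : (Fin 4 → ℤ) ⧸ H) := by
      rw [phi_e1]
      rw [show ((1 : ZMod 2)) = ((1 : ℤ) : ZMod 2) by norm_cast,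
          show ((1 : ZMod 6)) = ((1 : ℤ) : ZMod 6) by norm_cast, g2_coe, g6_coe]
      show (1 : ℤ) • qu + (1 : ℤ) • qv = _
      rw [one_zsmul, one_zsmul]
      show QuotientAddGroup.mk ((e 1 - e 0) + e 0) = _
      congr 1
      abel
    have E2 : g2 (phi (e 2)).1 + g6 (phi (e 2)).2 = (QuotientAddGroup.mk (e 2) : (Fin 4 → ℤ) ⧸ H) := by
      rw [phi_e2]
      rw [show ((0 : ZMod 2)) = ((0 : ℤ) : ZMod 2) by norm_cast,
          show ((4 : ZMod 6)) = ((4 : ℤ) : ZMod 6) by norm_cast, g2_coe, g6_coe]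
      show (0 : ℤ) • qu + (4 : ℤ) • qv = _
      rw [zero_zsmul, zero_add]
      show QuotientAddGroup.mk ((4 : ℤ) • e 0) = _
      rw [QuotientAddGroup.eq]
      exact mem_H_of_eq _ (-1) 1 1 1 (by decide)
    have E3 : g2 (phi (e 3)).1 + g6 (phi (e 3)).2 = (QuotientAddGroup.mk (e 3) : (Fin 4 → ℤ) ⧸ H) := by
      rw [phi_e3]
      rw [show ((1 : ZMod 2)) = ((1 : ℤ) : ZMod 2) by norm_cast,
          show ((2 : ZMod 6)) = ((2 : ℤ) : ZMod 6) by norm_cast, g2_coe, g6_coe]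
      show (1 : ℤ) • qu + (2 : ℤ) • qv = _
      rw [one_zsmul]
      show QuotientAddGroup.mk ((e 1 - e 0) + (2 : ℤ) • e 0) = _
      rw [QuotientAddGroup.eq]
      exact mem_H_of_eq _ 0 0 0 1 (by decide)
    fin_cases i
    · exact E0
    · exact E1
    · exact E2
    · exact E3
  intro q
  induction q using QuotientAddGroup.induction_on with
  | H x =>
    have := DFunLike.congr_fun key x
    simpa [invFun'_eq] using this

lemma psi_qu : psiHom qu = (1, 0) := by
  show phi (e 1 - e 0) = _
  rw [map_sub, phi_e0, phi_e1]
  decide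

lemma psi_qv : psiHom qv = (0, 1) := phi_e0

lemma right_inv' : Function.RightInverse invFun' psiHom := by
  rintro ⟨a, b⟩
  obtain ⟨m, rfl⟩ := ZMod.intCast_surjective a
  obtain ⟨k, rfl⟩ := ZMod.intCast_surjective b
  show psiHom (g2 _ + g6 _) = _
  rw [g2_coe, g6_coe, map_add, map_zsmul, map_zsmul, psi_qu, psi_qv]
  ext
  · show m • (1 : ZMod 2) + k • (0 : ZMod 2) = _
    simp [zsmul_eq_mul]
  · show m • (0 : ZMod 6) + k • (1 : ZMod 6) = _
    simp [zsmul_eq_mul]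

theorem stmt_6 :
    ∃ ψ : ((Fin 4 → ℤ) ⧸ H) ≃+ (ZMod 2 × ZMod 6),
      ψ (QuotientAddGroup.mk (e 0)) = ((0 : ZMod 2), (1 : ZMod 6)) ∧
      ψ (QuotientAddGroup.mk (e 1)) = ((1 : ZMod 2), (1 : ZMod 6)) ∧
      ψ (QuotientAddGroup.mk (e 2)) = ((0 : ZMod 2), (4 : ZMod 6)) ∧
      ψ (QuotientAddGroup.mk (e 3)) = ((1 : ZMod 2), (2 : ZMod 6)) ∧
      ψ (QuotientAddGroup.mk (e 0 + e 1 + e 2 + e 3)) = ((0 : ZMod 2), (2 : ZMod 6)) := by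
  refine ⟨{ toFun := psiHom, invFun := invFun', left_inv := left_inv',
            right_inv := right_inv', map_add' := psiHom.map_add }, ?_, ?_, ?_, ?_, ?_⟩
  · exact phi_e0
  · exact phi_e1
  · exact phi_e2
  · exact phi_e3
  · show phi (e 0 + e 1 + e 2 + e 3) = _
    rw [map_add, map_add, map_add, phi_e0, phi_e1, phi_e2, phi_e3]
    decide
end

section
/- Let B be a row-finite 0-1 matrix on V, let v ∈ V, and suppose Cᵀ is the edge explosion of Bᵀ at v with respect to (M₁, M₂) with M₁ a singleton, v splitting into v′ and v″ (so C is the reverse explosion of B at the corresponding edge). Then there is a bijection φ from the set of infinite paths of B starting at v onto the set of infinite paths of C starting at v″ such that for all such paths x, y and all k : ℤ, x ∼ₖ y (with respect to B) if and only if φ x ∼ₖ φ y (with respect to C); consequently (x,k,y) ↦ (φ x, k, φ y) is a bijection from the pointed path groupoid 𝒢_{(B,{v})} onto 𝒢_{(C,{v″})}. -/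
/-- A 0-1 matrix on an index type `V`. -/
def IsZeroOne {V : Type*} (B : V → V → ℕ) : Prop := ∀ i j, B i j = 0 ∨ B i j = 1

/-- `B` is row-finite: each row has finitely many nonzero entries. -/
def RowFinite {V : Type*} (B : V → V → ℕ) : Prop := ∀ i, {j | B i j ≠ 0}.Finite

/-- The conditions on the data `(v, M₁, M₂)` of a vertex explosion of the 0-1 matrix `B`:
`M₁` and `M₂` are a partition of `supp(B v) = {w | B v w = 1}` into nonempty sets. -/
structure ExplosionData {V : Type*} (B : V → V → ℕ) (v : V) (M₁ M₂ : Set V) : Prop where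
  zeroOne : IsZeroOne B
  nonempty₁ : M₁.Nonempty
  nonempty₂ : M₂.Nonempty
  disj : Disjoint M₁ M₂
  union : M₁ ∪ M₂ = {w | B v w = 1}

open Classical in
/-- The vertex explosion of `B` at `v` with respect to `(M₁, M₂)`; the vertex `v` is split
into `v′ = Sum.inr 0` and `v″ = Sum.inr 1`. -/
noncomputable def vertexExplosion {V : Type*} (B : V → V → ℕ) (v : V) (M₁ M₂ : Set V) :
    ({u : V // u ≠ v} ⊕ Fin 2) → ({u : V // u ≠ v} ⊕ Fin 2) → ℕ
  | Sum.inl u, Sum.inl w => B u.1 w.1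
  | Sum.inl u, Sum.inr _ => B u.1 v
  | Sum.inr a, Sum.inl w => if (a = 0 ∧ w.1 ∈ M₁) ∨ (a = 1 ∧ w.1 ∈ M₂) then 1 else 0
  | Sum.inr a, Sum.inr _ => if (a = 0 ∧ v ∈ M₁) ∨ (a = 1 ∧ v ∈ M₂) then 1 else 0

/-- An infinite path of a 0-1 matrix `B`. -/
def IsPath {V : Type*} (B : V → V → ℕ) (x : ℕ → V) : Prop := ∀ n, B (x n) (x (n + 1)) = 1

/-- `x ∼ₖ y` : `x n = y (n - k)` for all large `n`. -/
def SEquiv {W : Type*} (x : ℕ → W) (k : ℤ) (y : ℕ → W) : Prop :=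
  ∃ N : ℕ, (N : ℤ) ≥ k ∧ ∀ n ≥ N, x n = y (((n : ℤ) - k).toNat)

/-- The path groupoid of `B` pointed at `{v}`, as a set of triples `(x, k, y)`. -/
def PGrpd {V : Type*} (B : V → V → ℕ) (v : V) : Set ((ℕ → V) × ℤ × (ℕ → V)) :=
  {t | IsPath B t.1 ∧ IsPath B t.2.2 ∧ SEquiv t.1 t.2.1 t.2.2 ∧ t.1 0 = v ∧ t.2.2 0 = v}

-- auxiliary
open Classical in
noncomputable def ePhi {V : Type*} (v : V) (M₁ : Set V) (x : ℕ → V) (n : ℕ) :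
    ({u : V // u ≠ v} ⊕ Fin 2) :=
  if h : x n = v then (if n = 0 ∨ x (n - 1) ∉ M₁ then Sum.inr 1 else Sum.inr 0)
  else Sum.inl ⟨x n, h⟩

def ePi {V : Type*} (v : V) : ({u : V // u ≠ v} ⊕ Fin 2) → V :=
  Sum.elim (fun u => u.1) (fun _ => v)

theorem ePi_ePhi {V : Type*} (v : V) (M₁ : Set V) (x : ℕ → V) (n : ℕ) :
    ePi v (ePhi v M₁ x n) = x n := by
  unfold ePhi ePi
  by_cases h : x n = v
  · rw [dif_pos h]; split <;> simp [h]
  · rw [dif_neg h]; rfl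

theorem ePhi_zero {V : Type*} (v : V) (M₁ : Set V) (x : ℕ → V) (h : x 0 = v) :
    ePhi v M₁ x 0 = Sum.inr 1 := by
  unfold ePhi; rw [dif_pos h, if_pos (Or.inl rfl)]

open Classical in
theorem ePhi_succ {V : Type*} (v : V) (M₁ : Set V) (x : ℕ → V) (n : ℕ) (h : x (n + 1) = v) :
    ePhi v M₁ x (n + 1) = if x n ∈ M₁ then Sum.inr 0 else Sum.inr 1 := by
  unfold ePhi; rw [dif_pos h]
  by_cases hM : x n ∈ M₁ <;> simp [hM]

theorem ePhi_ne {V : Type*} (v : V) (M₁ : Set V) (x : ℕ → V) (n : ℕ) (h : x n ≠ v) :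
    ePhi v M₁ x n = Sum.inl ⟨x n, h⟩ := by
  unfold ePhi; rw [dif_neg h]

theorem ePhi_inr {V : Type*} (v : V) (M₁ : Set V) (x : ℕ → V) (n : ℕ) (h : x n = v) :
    ∃ i : Fin 2, ePhi v M₁ x n = Sum.inr i := by
  unfold ePhi; rw [dif_pos h]; split <;> exact ⟨_, rfl⟩

theorem ePhi_sequiv {V : Type*} (v : V) (M₁ : Set V) {x y : ℕ → V} {k : ℤ}
    (h : SEquiv x k y) : SEquiv (ePhi v M₁ x) k (ePhi v M₁ y) := by
  obtain ⟨N, hNk, hN⟩ := h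
  refine ⟨N + 1, by omega, fun n hn => ?_⟩
  set m := ((n : ℤ) - k).toNat with hm
  have hxy : x n = y m := hN n (by omega)
  have hn0 : n ≠ 0 := by omega
  have hm0 : m ≠ 0 := by omega
  have hpred : x (n - 1) = y (m - 1) := by
    have := hN (n - 1) (by omega)
    convert this using 2
    omega
  unfold ePhi
  by_cases hv : x n = v
  · rw [dif_pos hv, dif_pos (hxy.symm.trans hv)]
    have hiff : (n = 0 ∨ x (n - 1) ∉ M₁) ↔ (m = 0 ∨ y (m - 1) ∉ M₁) := by
      rw [hpred]; simp [hn0, hm0]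
    by_cases hc : n = 0 ∨ x (n - 1) ∉ M₁
    · rw [if_pos hc, if_pos (hiff.mp hc)]
    · rw [if_neg hc, if_neg (fun hh => hc (hiff.mpr hh))]
  · rw [dif_neg hv, dif_neg (fun hh => hv (hxy.trans hh))]
    exact congrArg _ (Subtype.ext hxy)

theorem sequiv_of_ePhi {V : Type*} (v : V) (M₁ : Set V) {x y : ℕ → V} {k : ℤ}
    (h : SEquiv (ePhi v M₁ x) k (ePhi v M₁ y)) : SEquiv x k y := by
  obtain ⟨N, hNk, hN⟩ := h
  refine ⟨N, hNk, fun n hn => ?_⟩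
  have := congrArg (ePi v) (hN n hn)
  rwa [ePi_ePhi, ePi_ePhi] at this


/-- If `Cᵀ` is the edge explosion of `Bᵀ` at `v` (so `C` is the reverse explosion of `B`
at the corresponding edge, with `v` splitting into `v′ = Sum.inr 0` and `v″ = Sum.inr 1`),
then the path spaces pointed at `v` resp. `v″` are equivariantly bijective, and the
pointed path groupoids are isomorphic. -/
theorem stmt_13 {V : Type*} (B : V → V → ℕ) (v : V) (M₁ M₂ : Set V)
    (hrf : RowFinite B) (hdata : ExplosionData (fun a b => B b a) v M₁ M₂)
    (hsingleton : ∃ e, M₁ = {e})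
    (C : ({u : V // u ≠ v} ⊕ Fin 2) → ({u : V // u ≠ v} ⊕ Fin 2) → ℕ)
    (hC : ∀ i j, C i j = vertexExplosion (fun a b => B b a) v M₁ M₂ j i) :
    ∃ φ : (ℕ → V) → (ℕ → ({u : V // u ≠ v} ⊕ Fin 2)),
      Set.BijOn φ {x | IsPath B x ∧ x 0 = v} {y | IsPath C y ∧ y 0 = Sum.inr 1} ∧
      (∀ x y, IsPath B x ∧ x 0 = v → IsPath B y ∧ y 0 = v →
        ∀ k : ℤ, (SEquiv x k y ↔ SEquiv (φ x) k (φ y))) ∧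
      Set.BijOn (fun t : (ℕ → V) × ℤ × (ℕ → V) => (φ t.1, t.2.1, φ t.2.2))
        (PGrpd B v) (PGrpd C (Sum.inr 1)) := by
    classical
  obtain ⟨hz, hne1, hne2, hdisj, hun⟩ := hdata
  have hmem : ∀ w, w ∈ M₁ ∪ M₂ ↔ B w v = 1 := by
    intro w; rw [hun]; simp
  -- C entry lemmas
  have hC1 : ∀ (a b : {u : V // u ≠ v}), C (Sum.inl a) (Sum.inl b) = B a.1 b.1 := by
    intro a b; rw [hC]; rfl
  have hC2 : ∀ (j : Fin 2) (b : {u : V // u ≠ v}), C (Sum.inr j) (Sum.inl b) = B v b.1 := by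
    intro j b; rw [hC]; rfl
  have hC3 : ∀ (a : {u : V // u ≠ v}) (j : Fin 2),
      C (Sum.inl a) (Sum.inr j) = 1 ↔ ((j = 0 ∧ a.1 ∈ M₁) ∨ (j = 1 ∧ a.1 ∈ M₂)) := by
    intro a j; rw [hC]
    show (if _ then (1:ℕ) else 0) = 1 ↔ _
    split <;> simp_all
  have hC4 : ∀ (i j : Fin 2),
      C (Sum.inr i) (Sum.inr j) = 1 ↔ ((j = 0 ∧ v ∈ M₁) ∨ (j = 1 ∧ v ∈ M₂)) := by
    intro i j; rw [hC]
    show (if _ then (1:ℕ) else 0) = 1 ↔ _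
    split <;> simp_all
  -- φ maps paths to paths
  have hpathC : ∀ x : ℕ → V, IsPath B x → IsPath C (ePhi v M₁ x) := by
    intro x hx n
    by_cases h1 : x (n + 1) = v
    · have hu : x n ∈ M₁ ∪ M₂ := (hmem (x n)).mpr (by rw [← h1]; exact hx n)
      rw [ePhi_succ v M₁ x n h1]
      by_cases h0 : x n = v
      · obtain ⟨i, hi⟩ := ePhi_inr v M₁ x n h0
        rw [hi]
        by_cases hM : x n ∈ M₁
        · rw [if_pos hM, (hC4 i 0)]; exact Or.inl ⟨rfl, h0 ▸ hM⟩
        · rw [if_neg hM, (hC4 i 1)]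
          exact Or.inr ⟨rfl, h0 ▸ (hu.resolve_left hM)⟩
      · rw [ePhi_ne v M₁ x n h0]
        by_cases hM : x n ∈ M₁
        · rw [if_pos hM, hC3]; exact Or.inl ⟨rfl, hM⟩
        · rw [if_neg hM, hC3]; exact Or.inr ⟨rfl, hu.resolve_left hM⟩
    · rw [ePhi_ne v M₁ x (n + 1) h1]
      by_cases h0 : x n = v
      · obtain ⟨i, hi⟩ := ePhi_inr v M₁ x n h0
        rw [hi, hC2]
        simpa [h0] using hx n
      · rw [ePhi_ne v M₁ x n h0, hC1]; exact hx n
  -- injectivity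
  have hinj : ∀ x y : ℕ → V, ePhi v M₁ x = ePhi v M₁ y → x = y := by
    intro x y h
    funext n
    rw [← ePi_ePhi v M₁ x n, h, ePi_ePhi]
  -- surjectivity helper
  have hsurj : ∀ z : ℕ → ({u : V // u ≠ v} ⊕ Fin 2), IsPath C z → z 0 = Sum.inr 1 →
      IsPath B (fun n => ePi v (z n)) ∧ (ePi v (z 0) = v) ∧
        ePhi v M₁ (fun n => ePi v (z n)) = z := by
    intro z hzp hz0
    have hpath : IsPath B (fun n => ePi v (z n)) := by
      intro n
      show B (ePi v (z n)) (ePi v (z (n + 1))) = 1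
      have hcn := hzp n
      rcases hn : z n with a | i <;> rcases hn1 : z (n + 1) with b | j <;>
        rw [hn, hn1] at hcn <;>
        simp only [ePi, Sum.elim_inl, Sum.elim_inr]
      · rw [hC1] at hcn; exact hcn
      · rw [hC3] at hcn
        refine (hmem a.1).mp ?_
        rcases hcn with ⟨_, h⟩ | ⟨_, h⟩
        · exact Or.inl h
        · exact Or.inr h
      · rw [hC2] at hcn; exact hcn
      · rw [hC4] at hcn
        refine (hmem v).mp ?_
        rcases hcn with ⟨_, h⟩ | ⟨_, h⟩
        · exact Or.inl h
        · exact Or.inr h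
    refine ⟨hpath, by simp [ePi, hz0], ?_⟩
    funext n
    rcases hn : z n with a | j
    · have hne : ePi v (z n) ≠ v := by rw [hn]; exact a.2
      rw [ePhi_ne v M₁ _ n hne]
      congr 1
      apply Subtype.ext
      show ePi v (z n) = a.1
      rw [hn]; rfl
    · have hv : ePi v (z n) = v := by rw [hn]; rfl
      match n, hn with
      | 0, hn => rw [ePhi_zero v M₁ _ hv, ← hn, hz0]
      | (m + 1), hn =>
        rw [ePhi_succ v M₁ _ m hv]
        have hcm := hzp m
        rcases hm : z m with a | i <;> rw [hm, hn] at hcm <;>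
          simp only [ePi, Sum.elim_inl, Sum.elim_inr]
        · rw [hC3] at hcm
          rcases hcm with ⟨hj, hM⟩ | ⟨hj, hM⟩
          · simp [hM, hj]
          · simp [show a.1 ∉ M₁ from fun h => Set.disjoint_left.mp hdisj h hM, hj]
        · rw [hC4] at hcm
          rcases hcm with ⟨hj, hM⟩ | ⟨hj, hM⟩
          · simp [hM, hj]
          · simp [show v ∉ M₁ from fun h => Set.disjoint_left.mp hdisj h hM, hj]
  refine ⟨ePhi v M₁, ⟨?_, ?_, ?_⟩, ?_, ?_, ?_, ?_⟩
  · rintro x ⟨hx, hx0⟩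
    exact ⟨hpathC x hx, ePhi_zero v M₁ x hx0⟩
  · exact fun x _ y _ h => hinj x y h
  · rintro z ⟨hzp, hz0⟩
    obtain ⟨hp, h0, he⟩ := hsurj z hzp hz0
    exact ⟨_, ⟨hp, h0⟩, he⟩
  · intro x y _ _ k
    exact ⟨ePhi_sequiv v M₁, sequiv_of_ePhi v M₁⟩
  · rintro ⟨x, k, y⟩ ⟨h1, h2, h3, h4, h5⟩
    exact ⟨hpathC x h1, hpathC y h2, ePhi_sequiv v M₁ h3,
      ePhi_zero v M₁ x h4, ePhi_zero v M₁ y h5⟩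
  · rintro ⟨x, k, y⟩ _ ⟨x', k', y'⟩ _ h
    simp only [Prod.mk.injEq] at h
    obtain ⟨h1, h2, h3⟩ := h
    simp only [Prod.mk.injEq]
    exact ⟨hinj _ _ h1, h2, hinj _ _ h3⟩
  · rintro ⟨z, k, w⟩ ⟨h1, h2, h3, h4, h5⟩
    obtain ⟨hpz, h0z, hez⟩ := hsurj z h1 h4
    obtain ⟨hpw, h0w, hew⟩ := hsurj w h2 h5
    refine ⟨⟨fun n => ePi v (z n), k, fun n => ePi v (w n)⟩,
      ⟨hpz, hpw, ?_, h0z, h0w⟩, ?_⟩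
    · rw [← hez, ← hew] at h3
      exact sequiv_of_ePhi v M₁ h3
    · simp only [Prod.mk.injEq]
      exact ⟨hez, trivial, hew⟩
end
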